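/- There does not exist an injective sequence (x_n)_{n≥1} of positive reals such that for all pairs n ≠ m both x_n + x_m and x_n · x_m belong to the set C₃ = {2^k + 2^l : k, l ∈ ℤ, l < k}. -/

import Mathlib

/-! ### ℕ-arithmetic lemmas -/

/-- Uniqueness of `2^i * odd` factorisation in ℕ. -/
private lemma pow2_odd_cancel : ∀ i : ℕ, ∀ {j x y : ℕ}, Odd x → Odd y →
    2 ^ i * x = 2 ^ j * y → i = j ∧ x = y := by
  intro i
  induction i with
  | zero =>
    intro j x y hx hy h
    cases j with
    | zero => simpa using h
    | succ k =>
      exfalso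
      simp only [pow_zero, one_mul, pow_succ] at h
      have : 2 ∣ x := ⟨2 ^ k * y, by rw [h]; ring⟩
      rcases this with ⟨c, hc⟩
      rcases hx with ⟨m, hm⟩
      omega
  | succ s ih =>
    intro j x y hx hy h
    cases j with
    | zero =>
      exfalso
      simp only [pow_zero, one_mul, pow_succ] at h
      have : 2 ∣ y := ⟨2 ^ s * x, by rw [← h]; ring⟩
      rcases this with ⟨c, hc⟩
      rcases hy with ⟨m, hm⟩
      omega
    | succ k =>
      have h' : 2 ^ s * x = 2 ^ k * y := by
        have : 2 * (2 ^ s * x) = 2 * (2 ^ k * y) := by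
          rw [pow_succ, pow_succ] at h; linarith [h]
        omega
      obtain ⟨h1, h2⟩ := ih hx hy h'
      exact ⟨by omega, h2⟩

/-- `2^a + 2^b = 2^c + 2^e` implies the exponent multisets agree. -/
private lemma two_pow_add_two_pow_inj : ∀ a : ℕ, ∀ {b c e : ℕ},
    2 ^ a + 2 ^ b = 2 ^ c + 2 ^ e → (a = c ∧ b = e) ∨ (a = e ∧ b = c) := by
  intro a
  induction a with
  | zero =>
    intro b c e h
    cases b with
    | zero =>
      cases c with
      | zero =>
        cases e with
        | zero => exact Or.inl ⟨rfl, rfl⟩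
        | succ w =>
          exfalso
          have h1 : 2 ≤ 2 ^ (w+1) := Nat.one_lt_two_pow (by omega)
          simp only [pow_zero] at h; omega
      | succ k =>
        exfalso
        have h1 : 2 ≤ 2 ^ (k+1) := Nat.one_lt_two_pow (by omega)
        have h2 : 1 ≤ 2 ^ e := Nat.one_le_two_pow
        simp only [pow_zero] at h; omega
    | succ t =>
      cases c with
      | zero =>
        have : (2:ℕ) ^ (t+1) = 2 ^ e := by simp only [pow_zero] at h; omega
        have := Nat.pow_right_injective (le_refl 2) this
        exact Or.inl ⟨rfl, this⟩
      | succ k =>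
        cases e with
        | zero =>
          have : (2:ℕ) ^ (t+1) = 2 ^ (k+1) := by simp only [pow_zero] at h; omega
          have := Nat.pow_right_injective (le_refl 2) this
          exact Or.inr ⟨rfl, this⟩
        | succ w =>
          exfalso
          have e1 : (2:ℕ) ^ (t+1) = 2 * 2 ^ t := by rw [pow_succ]; ring
          have e2 : (2:ℕ) ^ (k+1) = 2 * 2 ^ k := by rw [pow_succ]; ring
          have e3 : (2:ℕ) ^ (w+1) = 2 * 2 ^ w := by rw [pow_succ]; ring
          simp only [pow_zero] at h; omega
  | succ s ih =>
    intro b c e h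
    cases b with
    | zero =>
      cases c with
      | zero =>
        have : (2:ℕ) ^ (s+1) = 2 ^ e := by simp only [pow_zero] at h; omega
        have := Nat.pow_right_injective (le_refl 2) this
        exact Or.inr ⟨this, rfl⟩
      | succ k =>
        cases e with
        | zero =>
          have : (2:ℕ) ^ (s+1) = 2 ^ (k+1) := by simp only [pow_zero] at h; omega
          have := Nat.pow_right_injective (le_refl 2) this
          exact Or.inl ⟨this, rfl⟩
        | succ w =>
          exfalso
          have e1 : (2:ℕ) ^ (s+1) = 2 * 2 ^ s := by rw [pow_succ]; ring
          have e2 : (2:ℕ) ^ (k+1) = 2 * 2 ^ k := by rw [pow_succ]; ring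
          have e3 : (2:ℕ) ^ (w+1) = 2 * 2 ^ w := by rw [pow_succ]; ring
          simp only [pow_zero] at h; omega
    | succ t =>
      cases c with
      | zero =>
        exfalso
        cases e with
        | zero =>
          have h1 : 2 ≤ 2 ^ (s+1) := Nat.one_lt_two_pow (by omega)
          have h2 : 2 ≤ 2 ^ (t+1) := Nat.one_lt_two_pow (by omega)
          simp only [pow_zero] at h; omega
        | succ w =>
          have e1 : (2:ℕ) ^ (s+1) = 2 * 2 ^ s := by rw [pow_succ]; ring
          have e2 : (2:ℕ) ^ (t+1) = 2 * 2 ^ t := by rw [pow_succ]; ring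
          have e3 : (2:ℕ) ^ (w+1) = 2 * 2 ^ w := by rw [pow_succ]; ring
          simp only [pow_zero] at h; omega
      | succ k =>
        cases e with
        | zero =>
          exfalso
          have e1 : (2:ℕ) ^ (s+1) = 2 * 2 ^ s := by rw [pow_succ]; ring
          have e2 : (2:ℕ) ^ (t+1) = 2 * 2 ^ t := by rw [pow_succ]; ring
          have e3 : (2:ℕ) ^ (k+1) = 2 * 2 ^ k := by rw [pow_succ]; ring
          simp only [pow_zero] at h; omega
        | succ w =>
          have h' : 2 ^ s + 2 ^ t = 2 ^ k + 2 ^ w := by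
            have e1 : (2:ℕ) ^ (s+1) = 2 * 2 ^ s := by rw [pow_succ]; ring
            have e2 : (2:ℕ) ^ (t+1) = 2 * 2 ^ t := by rw [pow_succ]; ring
            have e3 : (2:ℕ) ^ (k+1) = 2 * 2 ^ k := by rw [pow_succ]; ring
            have e4 : (2:ℕ) ^ (w+1) = 2 * 2 ^ w := by rw [pow_succ]; ring
            omega
          rcases ih h' with ⟨h1, h2⟩ | ⟨h1, h2⟩
          · exact Or.inl ⟨by omega, by omega⟩
          · exact Or.inr ⟨by omega, by omega⟩

private lemma sum_exp_lt_false {a b c e : ℕ} (ha : 1 ≤ a) (hb : 1 ≤ b)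
    (hlt : a + b < c + e)
    (h : 2 ^ a + 2 ^ b + 2 ^ (a+b) = 2 ^ c + 2 ^ e + 2 ^ (c+e)) : False := by
  have h1 : (2:ℕ) ^ a ≤ 2 ^ (a+b-1) := Nat.pow_le_pow_right (by omega) (by omega)
  have h2 : (2:ℕ) ^ b ≤ 2 ^ (a+b-1) := Nat.pow_le_pow_right (by omega) (by omega)
  have h3 : (2:ℕ) ^ (a+b) = 2 * 2 ^ (a+b-1) := by
    rw [← pow_succ']; congr 1; omega
  have h4 : (2:ℕ) ^ (a+b+1) = 2 * 2 ^ (a+b) := by rw [pow_succ]; ring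
  have h5 : (2:ℕ) ^ (a+b+1) ≤ 2 ^ (c+e) := Nat.pow_le_pow_right (by omega) (by omega)
  have h6 : 1 ≤ (2:ℕ) ^ c := Nat.one_le_two_pow
  have h7 : 1 ≤ (2:ℕ) ^ e := Nat.one_le_two_pow
  omega

/-- Injectivity of `(a,b) ↦ (1+2^a)(1+2^b)` (weak form). -/
private lemma one_add_pow_mul_inj {a b c e : ℕ} (ha : 1 ≤ a) (hb : 1 ≤ b)
    (hc : 1 ≤ c) (he : 1 ≤ e)
    (h : (1 + 2 ^ a) * (1 + 2 ^ b) = (1 + 2 ^ c) * (1 + 2 ^ e)) :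
    a = c ∨ a = e := by
  have expand : ∀ p q : ℕ, (1 + 2 ^ p) * (1 + 2 ^ q) = 1 + 2 ^ p + 2 ^ q + 2 ^ (p+q) := by
    intro p q; rw [pow_add]; ring
  rw [expand, expand] at h
  have h' : 2 ^ a + 2 ^ b + 2 ^ (a+b) = 2 ^ c + 2 ^ e + 2 ^ (c+e) := by omega
  rcases Nat.lt_trichotomy (a+b) (c+e) with hlt | heq | hgt
  · exact absurd h' (by intro hh; exact sum_exp_lt_false ha hb hlt hh)
  · have hcancel : 2 ^ a + 2 ^ b = 2 ^ c + 2 ^ e := by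
      rw [heq] at h'; omega
    rcases two_pow_add_two_pow_inj a hcancel with ⟨h1, _⟩ | ⟨h1, _⟩
    · exact Or.inl h1
    · exact Or.inr h1
  · exact absurd h'.symm (by intro hh; exact sum_exp_lt_false hc he hgt hh)

/-- rational-square descent: `a² = m·b²` forces `m` to be a perfect square. -/
private lemma sq_of_sq_eq_mul_sq {a b m : ℕ} (hb : b ≠ 0) (h : a ^ 2 = m * b ^ 2) :
    ∃ t, m = t ^ 2 := by
  set g := Nat.gcd a b with hg
  have hg0 : g ≠ 0 := Nat.gcd_ne_zero_right hb
  obtain ⟨a', ha'⟩ : g ∣ a := Nat.gcd_dvd_left a b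
  obtain ⟨b', hb'⟩ : g ∣ b := Nat.gcd_dvd_right a b
  have hcop : Nat.Coprime a' b' := by
    have hda : a / g = a' := by rw [ha']; exact Nat.mul_div_cancel_left _ (Nat.pos_of_ne_zero hg0)
    have hdb : b / g = b' := by rw [hb']; exact Nat.mul_div_cancel_left _ (Nat.pos_of_ne_zero hg0)
    have := Nat.coprime_div_gcd_div_gcd (m := a) (n := b) (Nat.pos_of_ne_zero hg0)
    rwa [← hg, hda, hdb] at this
  have key : a' ^ 2 = m * b' ^ 2 := by
    have h2 : g ^ 2 * a' ^ 2 = g ^ 2 * (m * b' ^ 2) := by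
      rw [ha', hb'] at h; ring_nf at h ⊢; linarith [h]
    exact Nat.eq_of_mul_eq_mul_left (by positivity) h2
  have hdvd : b' ^ 2 ∣ a' ^ 2 := ⟨m, by rw [key]; ring⟩
  have hcop2 : Nat.Coprime (b' ^ 2) (a' ^ 2) := Nat.Coprime.pow 2 2 hcop.symm
  have hb1 : b' ^ 2 = 1 := Nat.Coprime.eq_one_of_dvd hcop2 hdvd
  exact ⟨a', by rw [key, hb1, mul_one]⟩

/-- if `1+2^d` is a perfect square with `d ≥ 1` then `d = 3` and the root is 3. -/
private lemma one_add_two_pow_sq {d t : ℕ} (hd : 1 ≤ d) (h : 1 + 2 ^ d = t ^ 2) :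
    d = 3 ∧ t = 3 := by
  have hdeven : 2 ∣ 2 ^ d := dvd_pow_self 2 (by omega)
  have htodd : Odd t := by
    rcases Nat.even_or_odd t with he | ho
    · exfalso; rcases he with ⟨u, hu⟩; rcases hdeven with ⟨v, hv⟩
      obtain ⟨w, hw⟩ : ∃ w, t ^ 2 = 4 * w := ⟨u * u, by rw [hu]; ring⟩
      omega
    · exact ho
  have ht2 : 2 ≤ t := by nlinarith [Nat.one_le_two_pow (n := d)]
  set s := t - 1 with hs
  have hts : t = s + 1 := by omega
  have hkey : s * (s + 2) = 2 ^ d := by nlinarith [h, hts]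
  have hsdvd : s ∣ 2 ^ d := ⟨s + 2, hkey.symm⟩
  have hs2dvd : s + 2 ∣ 2 ^ d := ⟨s, by rw [← hkey]; ring⟩
  obtain ⟨i, hi, hsi⟩ := (Nat.dvd_prime_pow Nat.prime_two).mp hsdvd
  obtain ⟨j, hj, hsj⟩ := (Nat.dvd_prime_pow Nat.prime_two).mp hs2dvd
  have hseven : s % 2 = 0 := by rcases htodd with ⟨u, hu⟩; omega
  have hi1 : 1 ≤ i := by
    rcases Nat.eq_zero_or_pos i with h0 | h1
    · exfalso; rw [h0, pow_zero] at hsi; omega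
    · exact h1
  rcases Nat.lt_or_ge i 2 with hilt | hige
  · have hi' : i = 1 := by omega
    have hs2 : s = 2 := by rw [hsi, hi', pow_one]
    have h8 : (2:ℕ) ^ d = 8 := by rw [← hkey, hs2]
    have hd3 : d = 3 :=
      Nat.pow_right_injective (le_refl 2) (h8.trans (by norm_num : (8:ℕ) = 2 ^ 3))
    exact ⟨hd3, by omega⟩
  · exfalso
    have h4i : (4:ℕ) ∣ 2 ^ i := by
      have : (2:ℕ)^2 ∣ 2 ^ i := pow_dvd_pow 2 hige
      simpa using this
    have h4j : j ≥ 2 → (4:ℕ) ∣ 2 ^ j := by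
      intro hj2
      have : (2:ℕ)^2 ∣ 2 ^ j := pow_dvd_pow 2 hj2
      simpa using this
    have hjsmall : j ≤ 1 → (2:ℕ) ^ j ≤ 2 := by
      intro hj1
      calc (2:ℕ) ^ j ≤ 2 ^ 1 := Nat.pow_le_pow_right (by omega) hj1
      _ = 2 := by norm_num
    have hge4 : (4:ℕ) ≤ 2 ^ i := by
      calc (4:ℕ) = 2 ^ 2 := by norm_num
      _ ≤ 2 ^ i := Nat.pow_le_pow_right (by omega) hige
    have heq : (2:ℕ) ^ j = 2 ^ i + 2 := by omega
    rcases Nat.lt_or_ge j 2 with hjlt | hjge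
    · have := hjsmall (by omega); omega
    · have := h4j hjge; omega

/-! ### ℚ lemmas about odd parts -/

private def OddRat (w : ℚ) : Prop := ∃ a b : ℕ, Odd a ∧ Odd b ∧ w = (a : ℚ) / (b : ℚ)

private lemma OddRat.pos {w : ℚ} (h : OddRat w) : 0 < w := by
  obtain ⟨a, b, ha, hb, rfl⟩ := h
  have ha1 : 1 ≤ a := ha.pos
  have hb1 : 1 ≤ b := hb.pos
  positivity

private lemma OddRat.mul {w₁ w₂ : ℚ} (h₁ : OddRat w₁) (h₂ : OddRat w₂) :
    OddRat (w₁ * w₂) := by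
  obtain ⟨a, b, ha, hb, rfl⟩ := h₁
  obtain ⟨c, d, hc, hd, rfl⟩ := h₂
  refine ⟨a * c, b * d, ha.mul hc, hb.mul hd, ?_⟩
  push_cast
  rw [div_mul_div_comm]

private lemma oddRat_natCast {n : ℕ} (hn : Odd n) : OddRat (n : ℚ) :=
  ⟨n, 1, hn, odd_one, by norm_num⟩

private lemma oddRat_cancel_aux (n : ℕ) {w₁ w₂ : ℚ} (h₁ : OddRat w₁) (h₂ : OddRat w₂)
    (h : w₁ = 2 ^ (n : ℤ) * w₂) : n = 0 := by
  obtain ⟨a, b, ha, hb, rfl⟩ := h₁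
  obtain ⟨c, d, hc, hd, rfl⟩ := h₂
  have hb0 : (b : ℚ) ≠ 0 := by exact_mod_cast hb.pos.ne'
  have hd0 : (d : ℚ) ≠ 0 := by exact_mod_cast hd.pos.ne'
  rw [zpow_natCast] at h
  have key : (a : ℚ) * d = 2 ^ n * (c * b) := by
    field_simp at h
    linarith [h]
  have keyN : a * d = 2 ^ n * (c * b) := by exact_mod_cast key
  by_contra hn
  have h2 : 2 ∣ a * d := by
    refine Dvd.dvd.trans ?_ ⟨c * b, keyN⟩
    exact dvd_pow_self 2 hn
  obtain ⟨k, hk⟩ : Odd (a * d) := ha.mul hd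
  omega

private lemma oddRat_cancel {t : ℤ} {w₁ w₂ : ℚ} (h₁ : OddRat w₁) (h₂ : OddRat w₂)
    (h : w₁ = 2 ^ t * w₂) : t = 0 ∧ w₁ = w₂ := by
  have ht0 : t = 0 := by
    rcases le_or_gt 0 t with hle | hlt
    · have := oddRat_cancel_aux t.toNat h₁ h₂ (by rwa [Int.toNat_of_nonneg hle])
      omega
    · have h' : w₂ = 2 ^ (-t) * w₁ := by
        rw [h, ← mul_assoc, ← zpow_add₀ (by norm_num : (2:ℚ) ≠ 0)]
        simp
      have := oddRat_cancel_aux (-t).toNat h₂ h₁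
        (by rwa [Int.toNat_of_nonneg (by omega : (0:ℤ) ≤ -t)])
      omega
  exact ⟨ht0, by rw [h, ht0]; simp⟩

private lemma pow2_mul_oddRat_inj {s t : ℤ} {w₁ w₂ : ℚ} (h₁ : OddRat w₁) (h₂ : OddRat w₂)
    (h : 2 ^ s * w₁ = 2 ^ t * w₂) : s = t ∧ w₁ = w₂ := by
  have h2 : (2:ℚ) ^ s ≠ 0 := zpow_ne_zero _ (by norm_num)
  have h' : w₁ = 2 ^ (t - s) * w₂ := by
    rw [zpow_sub₀ (by norm_num : (2:ℚ) ≠ 0)]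
    field_simp
    linarith [h]
  obtain ⟨hts, hw⟩ := oddRat_cancel h₁ h₂ h'
  exact ⟨by omega, hw⟩

/-- decomposition of a positive rational as `2^v * (odd/odd)`. -/
private lemma exists_oddRat_decomp {q : ℚ} (hq : 0 < q) :
    ∃ v : ℤ, ∃ w : ℚ, OddRat w ∧ q = 2 ^ v * w := by
  have hnum : q.num.toNat ≠ 0 := by
    have := Rat.num_pos.mpr hq
    omega
  have hden : q.den ≠ 0 := q.den_nz
  obtain ⟨i, a, hna2, hna⟩ := Nat.exists_eq_pow_mul_and_not_dvd hnum 2 (by norm_num)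
  obtain ⟨j, b, hnb2, hnb⟩ := Nat.exists_eq_pow_mul_and_not_dvd hden 2 (by norm_num)
  have ha : Odd a := Nat.odd_iff.mpr (by omega)
  have hb : Odd b := Nat.odd_iff.mpr (by omega)
  refine ⟨(i : ℤ) - j, (a : ℚ) / b, ⟨a, b, ha, hb, rfl⟩, ?_⟩
  have hb0 : (b : ℚ) ≠ 0 := by exact_mod_cast hb.pos.ne'
  have htn : ((q.num.toNat : ℤ) : ℚ) = (q.num : ℚ) := by
    exact_mod_cast congrArg (fun z : ℤ => (z : ℚ)) (Int.toNat_of_nonneg (Rat.num_pos.mpr hq).le)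
  have htn2 : (q.num.toNat : ℚ) = (q.num : ℚ) := by exact_mod_cast htn
  have hq1 : q = (q.num.toNat : ℚ) / (q.den : ℚ) := by
    conv_lhs => rw [← Rat.num_div_den q]
    rw [htn2]
  rw [hq1, hna, hnb, zpow_sub₀ (by norm_num : (2:ℚ) ≠ 0), zpow_natCast, zpow_natCast]
  have h2i : (2:ℚ) ^ i ≠ 0 := by positivity
  have h2j : (2:ℚ) ^ j ≠ 0 := by positivity
  push_cast
  field_simp

/-- normal form of an element of `C₃` over ℚ. -/
private lemma c3q_norm {k l : ℤ} (h : l < k) :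
    ∃ d : ℕ, 1 ≤ d ∧ (2:ℚ) ^ k + 2 ^ l = 2 ^ l * ((1 + 2 ^ d : ℕ) : ℚ) := by
  refine ⟨(k - l).toNat, by omega, ?_⟩
  have hkl : ((k - l).toNat : ℤ) = k - l := Int.toNat_of_nonneg (by omega)
  have : ((2:ℚ) ^ ((k - l).toNat) : ℚ) = (2:ℚ) ^ (k - l) := by
    rw [← zpow_natCast, hkl]
  push_cast
  rw [this, mul_add, mul_one, ← zpow_add₀ (by norm_num : (2:ℚ) ≠ 0)]
  ring_nf

private lemma odd_one_add_two_pow {d : ℕ} (hd : 1 ≤ d) : Odd (1 + 2 ^ d) := by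
  have : (2:ℕ) ^ d = 2 * 2 ^ (d - 1) := by
    rw [← pow_succ']; congr 1; omega
  exact Nat.odd_iff.mpr (by omega)

/-- There is no injective sequence `(x_n)` of positive reals such that for all `n ≠ m`
both `x_n + x_m` and `x_n * x_m` lie in `C₃ = {2^k + 2^l : k, l ∈ ℤ, l < k}`. -/
theorem stmt_13 :
    ¬ ∃ x : ℕ → ℝ,
      Function.Injective x ∧ (∀ n, 0 < x n) ∧
      (∀ n m, n ≠ m →
        (∃ k l : ℤ, l < k ∧ x n + x m = (2 : ℝ) ^ k + (2 : ℝ) ^ l) ∧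
        (∃ k l : ℤ, l < k ∧ x n * x m = (2 : ℝ) ^ k + (2 : ℝ) ^ l)) := by
  classical
  rintro ⟨x, hinj, hpos, hrel⟩
  -- sums as rationals
  have hsumr : ∀ n m : ℕ, n ≠ m → ∃ r : ℚ,
      (∃ k l : ℤ, l < k ∧ r = 2 ^ k + 2 ^ l) ∧ x n + x m = (r : ℝ) := by
    intro n m hnm
    obtain ⟨k, l, hlk, he⟩ := (hrel n m hnm).1
    refine ⟨(2:ℚ) ^ k + 2 ^ l, ⟨k, l, hlk, rfl⟩, ?_⟩
    rw [he]; push_cast; ring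
  have hprodr : ∀ n m : ℕ, n ≠ m → ∃ r : ℚ,
      (∃ k l : ℤ, l < k ∧ r = 2 ^ k + 2 ^ l) ∧ x n * x m = (r : ℝ) := by
    intro n m hnm
    obtain ⟨k, l, hlk, he⟩ := (hrel n m hnm).2
    refine ⟨(2:ℚ) ^ k + 2 ^ l, ⟨k, l, hlk, rfl⟩, ?_⟩
    rw [he]; push_cast; ring
  -- every term is rational
  have hx : ∀ n : ℕ, ∃ r : ℚ, x n = (r : ℝ) := by
    intro n
    obtain ⟨r1, _, e1⟩ := hsumr n (n+1) (by omega)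
    obtain ⟨r2, _, e2⟩ := hsumr n (n+2) (by omega)
    obtain ⟨r3, _, e3⟩ := hsumr (n+1) (n+2) (by omega)
    refine ⟨(r1 + r2 - r3) / 2, ?_⟩
    push_cast
    linarith [e1, e2, e3]
  choose q hq using hx
  have hqpos : ∀ n, 0 < q n := by
    intro n
    have := hpos n
    rw [hq n] at this
    exact_mod_cast this
  have hqne : ∀ n m : ℕ, n ≠ m → q n ≠ q m := by
    intro n m hnm hc
    apply hnm
    apply hinj
    rw [hq n, hq m, hc]
  have hqsum : ∀ n m : ℕ, n ≠ m → ∃ k l : ℤ, l < k ∧ q n + q m = 2 ^ k + 2 ^ l := by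
    intro n m hnm
    obtain ⟨r, ⟨k, l, hlk, hr⟩, he⟩ := hsumr n m hnm
    refine ⟨k, l, hlk, ?_⟩
    rw [← hr]
    have : ((q n + q m : ℚ) : ℝ) = (r : ℝ) := by
      push_cast
      rw [← hq n, ← hq m]
      exact he
    exact_mod_cast this
  have hqprod : ∀ n m : ℕ, n ≠ m → ∃ k l : ℤ, l < k ∧ q n * q m = 2 ^ k + 2 ^ l := by
    intro n m hnm
    obtain ⟨r, ⟨k, l, hlk, hr⟩, he⟩ := hprodr n m hnm
    refine ⟨k, l, hlk, ?_⟩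
    rw [← hr]
    have : ((q n * q m : ℚ) : ℝ) = (r : ℝ) := by
      push_cast
      rw [← hq n, ← hq m]
      exact he
    exact_mod_cast this
  -- 2-adic decomposition
  have hdec : ∀ n : ℕ, ∃ v : ℤ, ∃ w : ℚ, OddRat w ∧ q n = 2 ^ v * w :=
    fun n => exists_oddRat_decomp (hqpos n)
  choose v u hu hqd using hdec
  -- pairwise products of units
  have hUnit : ∀ n m : ℕ, n ≠ m → ∃ d : ℕ, 1 ≤ d ∧ u n * u m = ((1 + 2 ^ d : ℕ) : ℚ) := by
    intro n m hnm
    obtain ⟨k, l, hlk, hr⟩ := hqprod n m hnm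
    obtain ⟨d, hd, hnorm⟩ := c3q_norm hlk
    have heq : 2 ^ (v n + v m) * (u n * u m) = 2 ^ l * ((1 + 2 ^ d : ℕ) : ℚ) := by
      rw [zpow_add₀ (by norm_num : (2:ℚ) ≠ 0)]
      rw [← hnorm, ← hr, hqd n, hqd m]
      ring
    obtain ⟨_, hw⟩ := pow2_mul_oddRat_inj ((hu n).mul (hu m))
      (oddRat_natCast (odd_one_add_two_pow hd)) heq
    exact ⟨d, hd, hw⟩
  -- same units force the unit to be 3
  have hsame3 : ∀ n m : ℕ, n ≠ m → u n = u m → u n = 3 := by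
    intro n m hnm hum
    obtain ⟨d, hd, hw⟩ := hUnit n m hnm
    rw [← hum] at hw
    obtain ⟨a, b, ha, hb, hab⟩ := hu n
    have hb0 : (b : ℚ) ≠ 0 := by exact_mod_cast hb.pos.ne'
    have hq2 : ((a : ℚ) / b) * ((a : ℚ) / b) = ((1 + 2 ^ d : ℕ) : ℚ) := by
      rw [← hab]; exact hw
    have hnat : a ^ 2 = (1 + 2 ^ d) * b ^ 2 := by
      have : (a : ℚ) ^ 2 = ((1 + 2 ^ d : ℕ) : ℚ) * (b : ℚ) ^ 2 := by
        field_simp at hq2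
        push_cast at hq2 ⊢
        nlinarith [hq2]
      exact_mod_cast this
    obtain ⟨t, ht⟩ := sq_of_sq_eq_mul_sq (by exact_mod_cast hb.pos.ne') hnat
    obtain ⟨hd3, ht3⟩ := one_add_two_pow_sq hd ht
    have h9 : u n * u n = 9 := by
      rw [hw, hd3]; norm_num
    have hupos : 0 < u n := (hu n).pos
    have hfac : (u n - 3) * (u n + 3) = 0 := by linear_combination h9
    rcases mul_eq_zero.mp hfac with h | h
    · linarith [h]
    · linarith [h, hupos]
  -- adjacent valuations for equal units
  have hadj : ∀ n m : ℕ, n ≠ m → u n = u m → v n < v m → v m = v n + 1 := by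
    intro n m hnm hum hvlt
    have h3n : u n = 3 := hsame3 n m hnm hum
    have h3m : u m = 3 := by rw [← hum]; exact h3n
    obtain ⟨k, l, hlk, hr⟩ := hqsum n m hnm
    obtain ⟨d, hd, hnorm⟩ := c3q_norm hlk
    set g : ℕ := (v m - v n).toNat with hg
    have hg1 : 1 ≤ g := by omega
    have hgz : ((g : ℤ)) = v m - v n := Int.toNat_of_nonneg (by omega)
    have hsum2 : 2 ^ (v n) * ((3 * (1 + 2 ^ g) : ℕ) : ℚ) = 2 ^ l * ((1 + 2 ^ d : ℕ) : ℚ) := by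
      rw [← hnorm, ← hr, hqd n, hqd m, h3n, h3m]
      have hvm : (2:ℚ) ^ (v m) = 2 ^ (v n) * 2 ^ (g : ℤ) := by
        rw [← zpow_add₀ (by norm_num : (2:ℚ) ≠ 0)]
        congr 1
        omega
      rw [hvm, zpow_natCast]
      push_cast
      ring
    have hodd1 : Odd (3 * (1 + 2 ^ g)) := (by decide : Odd 3).mul (odd_one_add_two_pow hg1)
    obtain ⟨_, hw⟩ := pow2_mul_oddRat_inj (oddRat_natCast hodd1)
      (oddRat_natCast (odd_one_add_two_pow hd)) hsum2
    have hnat : 3 * (1 + 2 ^ g) = 1 + 2 ^ d := by exact_mod_cast hw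
    -- conclude g = 1
    have hgone : g = 1 := by
      by_contra hgne
      have hg2 : 2 ≤ g := by omega
      have h4g : (4:ℕ) ∣ 2 ^ g := by
        have : (2:ℕ) ^ 2 ∣ 2 ^ g := pow_dvd_pow 2 hg2
        simpa using this
      have hG4 : (4:ℕ) ≤ 2 ^ g := by
        calc (4:ℕ) = 2 ^ 2 := by norm_num
        _ ≤ 2 ^ g := Nat.pow_le_pow_right (by omega) hg2
      have h4d : 2 ≤ d → (4:ℕ) ∣ 2 ^ d := by
        intro hd2
        have : (2:ℕ) ^ 2 ∣ 2 ^ d := pow_dvd_pow 2 hd2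
        simpa using this
      have hdle : d ≤ 1 → (2:ℕ) ^ d ≤ 2 := by
        intro hd1
        calc (2:ℕ) ^ d ≤ 2 ^ 1 := Nat.pow_le_pow_right (by omega) hd1
        _ = 2 := by norm_num
      rcases Nat.lt_or_ge d 2 with hdlt | hdge
      · have := hdle (by omega); omega
      · have := h4d hdge; omega
    omega
  -- no three indices with equal units
  have key1 : ∀ n m p : ℕ, n ≠ m → n ≠ p → m ≠ p → u n = u m → u m = u p → False := by
    intro n m p hnm hnp hmp hu1 hu2
    have hu3 : u n = u p := hu1.trans hu2
    have hvne1 : v n ≠ v m := by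
      intro hc
      exact hqne n m hnm (by rw [hqd n, hqd m, hu1, hc])
    have hvne2 : v n ≠ v p := by
      intro hc
      exact hqne n p hnp (by rw [hqd n, hqd p, hu3, hc])
    have hvne3 : v m ≠ v p := by
      intro hc
      exact hqne m p hmp (by rw [hqd m, hqd p, hu2, hc])
    have a1 := hadj n m hnm hu1
    have a2 := hadj m n (Ne.symm hnm) hu1.symm
    have a3 := hadj n p hnp hu3
    have a4 := hadj p n (Ne.symm hnp) hu3.symm
    have a5 := hadj m p hmp hu2
    have a6 := hadj p m (Ne.symm hmp) hu2.symm
    omega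
  -- no four indices with pairwise distinct units
  have key2 : ∀ n m p r : ℕ, n ≠ m → p ≠ r → n ≠ p → m ≠ r →
      u m ≠ u p → u n ≠ u r → False := by
    intro n m p r hnm hpr hnp hmr hump hunr
    obtain ⟨d1, hd1, h1⟩ := hUnit n m hnm
    obtain ⟨d2, hd2, h2⟩ := hUnit p r hpr
    obtain ⟨d3, hd3, h3⟩ := hUnit n p hnp
    obtain ⟨d4, hd4, h4⟩ := hUnit m r hmr
    have heqQ : ((1 + 2 ^ d1 : ℕ) : ℚ) * ((1 + 2 ^ d2 : ℕ) : ℚ)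
        = ((1 + 2 ^ d3 : ℕ) : ℚ) * ((1 + 2 ^ d4 : ℕ) : ℚ) := by
      rw [← h1, ← h2, ← h3, ← h4]; ring
    have heqN : (1 + 2 ^ d1) * (1 + 2 ^ d2) = (1 + 2 ^ d3) * (1 + 2 ^ d4) := by
      exact_mod_cast heqQ
    have hun0 : u n ≠ 0 := (hu n).pos.ne'
    have hum0 : u m ≠ 0 := (hu m).pos.ne'
    rcases one_add_pow_mul_inj hd1 hd2 hd3 hd4 heqN with hcase | hcase
    · apply hump
      have : u n * u m = u n * u p := by rw [h1, h3, hcase]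
      exact (mul_left_cancel₀ hun0 this).symm ▸ rfl
    · apply hunr
      have : u m * u n = u m * u r := by
        rw [mul_comm, h1, h4, hcase]
      exact mul_left_cancel₀ hum0 this
  -- select indices among 0..5
  set s : Finset ℕ := Finset.range 6 with hs
  by_cases hA : 2 < (s.filter (fun i => u i = 3)).card
  · obtain ⟨a, b, c, ha, hb, hc, hab, hac, hbc⟩ := Finset.two_lt_card_iff.mp hA
    have hua : u a = 3 := (Finset.mem_filter.mp ha).2
    have hub : u b = 3 := (Finset.mem_filter.mp hb).2
    have huc : u c = 3 := (Finset.mem_filter.mp hc).2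
    exact key1 a b c hab hac hbc (hua.trans hub.symm) (hub.trans huc.symm)
  · push_neg at hA
    have hcards : (s.filter (fun i => u i = 3)).card
        + (s.filter (fun i => ¬ u i = 3)).card = 6 := by
      rw [Finset.card_filter_add_card_filter_not]
      simp [hs]
    have hB : 4 ≤ (s.filter (fun i => ¬ u i = 3)).card := by omega
    obtain ⟨t, hts, htc⟩ := Finset.exists_subset_card_eq hB
    obtain ⟨a, hat⟩ := Finset.card_pos.mp (by omega : 0 < t.card)
    have hterase : (t.erase a).card = 3 := by
      rw [Finset.card_erase_of_mem hat, htc]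
    obtain ⟨b, c, e, hbc, hbe, hce, habc⟩ := Finset.card_eq_three.mp hterase
    have hbt : b ∈ t.erase a := by rw [habc]; simp
    have hct : c ∈ t.erase a := by rw [habc]; simp
    have het : e ∈ t.erase a := by rw [habc]; simp
    have hba : b ≠ a := (Finset.mem_erase.mp hbt).1
    have hca : c ≠ a := (Finset.mem_erase.mp hct).1
    have hea : e ≠ a := (Finset.mem_erase.mp het).1
    have hmem : ∀ i, i ∈ t → ¬ u i = 3 := by
      intro i hi
      exact (Finset.mem_filter.mp (hts hi)).2
    have hdistu : ∀ i j, i ∈ t → j ∈ t → i ≠ j → u i ≠ u j := by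
      intro i j hi hj hij hc'
      exact hmem i hi (hsame3 i j hij hc')
    have hbt' : b ∈ t := (Finset.mem_erase.mp hbt).2
    have hct' : c ∈ t := (Finset.mem_erase.mp hct).2
    have het' : e ∈ t := (Finset.mem_erase.mp het).2
    -- use indices a b c e : pairs (a,b),(c,e),(a,c),(b,e)
    exact key2 a b c e (Ne.symm hba) hce (Ne.symm hca) hbe
      (hdistu b c hbt' hct' hbc) (hdistu a e hat het' (Ne.symm hea))
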